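/- arXiv:1207.1321 — 3 statements merged into one kernel-verified Lean document; each statement's English description precedes it below -/
import Mathlib

section
/- For |x| < l and a nonnegative integer k, the principal value integral ∫_{-l}^{l} r^k/(r−x) dr equals −∑_{j≥0, j≠k} ((1−(−1)^{j−k})/(j−k)) x^j l^{k−j}, where the series converges absolutely. -/
open MeasureTheory Filter Set

/-- PV ∫_{-l}^{l} r^k/(r−x) dr = −∑_{j≥0, j≠k} ((1−(−1)^{j−k})/(j−k)) x^j l^{k−j},
with absolute convergence of the series. -/
theorem stmt_0 (l x : ℝ) (k : ℕ) (hl : 0 < l) (hx : |x| < l) :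
    Summable (fun j : ℕ =>
      |if j = k then (0 : ℝ) else
        (1 - (-1 : ℝ) ^ ((j : ℤ) - (k : ℤ))) / ((j : ℝ) - (k : ℝ)) * x ^ j * l ^ ((k : ℤ) - (j : ℤ))|)
    ∧
    Tendsto (fun ε : ℝ =>
        ∫ r in Ioo (-l) l \ Ioo (x - ε) (x + ε), r ^ k / (r - x))
      (nhdsWithin 0 (Ioi 0))
      (nhds (-∑' j : ℕ,
        if j = k then (0 : ℝ) else
          (1 - (-1 : ℝ) ^ ((j : ℤ) - (k : ℤ))) / ((j : ℝ) - (k : ℝ)) * x ^ j * l ^ ((k : ℤ) - (j : ℤ)))) := by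
  obtain ⟨hx1, hx2⟩ := abs_lt.mp hx
  have hlx : (0:ℝ) < l - x := by linarith
  have hxl : (0:ℝ) < l + x := by linarith
  have hl0 : l ≠ 0 := ne_of_gt hl
  set f : ℕ → ℝ := fun j => if j = k then (0:ℝ) else
      (1 - (-1 : ℝ) ^ ((j : ℤ) - (k : ℤ))) / ((j : ℝ) - (k : ℝ)) * x ^ j * l ^ ((k : ℤ) - (j : ℤ))
    with hfdef
  have hratio : |x| / l < 1 := (div_lt_one hl).mpr hx
  -- the geometric bound
  have hbound : ∀ j, |f j| ≤ 2 * l ^ k * (|x| / l) ^ j := by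
    intro j
    by_cases hj : j = k
    · simp only [hfdef, hj, if_pos rfl, abs_zero]
      positivity
    · have h1 : |f j| = |1 - (-1:ℝ)^((j:ℤ)-(k:ℤ))| / |(j:ℝ)-(k:ℝ)| * |x|^j * l^((k:ℤ)-(j:ℤ)) := by
        rw [hfdef]
        simp only [if_neg hj]
        rw [abs_mul, abs_mul, abs_div, abs_pow, abs_of_pos (zpow_pos hl _)]
      have h2 : |1 - (-1:ℝ)^((j:ℤ)-(k:ℤ))| ≤ 2 := by
        rcases Int.even_or_odd ((j:ℤ)-(k:ℤ)) with h | h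
        · rw [h.neg_one_zpow]; norm_num
        · rw [h.neg_one_zpow]; norm_num
      have hjk : (j:ℤ) - (k:ℤ) ≠ 0 := sub_ne_zero.mpr (by exact_mod_cast hj)
      have h3 : (1:ℝ) ≤ |(j:ℝ)-(k:ℝ)| := by
        have h4 : (1:ℤ) ≤ |(j:ℤ)-(k:ℤ)| := Int.one_le_abs hjk
        have h5 : ((|(j:ℤ)-(k:ℤ)| : ℤ) : ℝ) = |(j:ℝ)-(k:ℝ)| := by push_cast; rfl
        rw [← h5]; exact_mod_cast h4
      have hB : (0:ℝ) < |(j:ℝ)-(k:ℝ)| := lt_of_lt_of_le one_pos h3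
      calc |f j| = (|1 - (-1:ℝ)^((j:ℤ)-(k:ℤ))| / |(j:ℝ)-(k:ℝ)|) * (|x|^j * l^((k:ℤ)-(j:ℤ))) := by
            rw [h1]; ring
        _ ≤ 2 * (|x|^j * l^((k:ℤ)-(j:ℤ))) := by
            apply mul_le_mul_of_nonneg_right _ (by positivity)
            rw [div_le_iff₀ hB]
            nlinarith
        _ = 2 * l^k * (|x|/l)^j := by
            rw [zpow_sub₀ hl0, zpow_natCast, zpow_natCast, div_pow]
            field_simp
  have hgeo : Summable (fun j : ℕ => 2 * l ^ k * (|x|/l)^j) :=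
    (summable_geometric_of_lt_one (by positivity) hratio).mul_left _
  have habs : Summable (fun j => |f j|) :=
    Summable.of_nonneg_of_le (fun j => abs_nonneg _) hbound hgeo
  have hsumf : Summable f := summable_abs_iff.mp habs
  -- tail sum via log series
  have hu : |x / l| < 1 := by rwa [abs_div, abs_of_pos hl]
  have h1s := Real.hasSum_pow_div_log_of_abs_lt_one hu
  have h2s := Real.hasSum_pow_div_log_of_abs_lt_one (x := -(x/l)) (by rwa [abs_neg])
  have htail : HasSum (fun n : ℕ => f (n + (k+1))) (x^k * (Real.log (l+x) - Real.log (l-x))) := by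
    have h3 := (h1s.sub h2s).mul_left (x^k)
    convert h3 using 2 with n
    · rfl
    · have hnk : n + (k+1) ≠ k := by omega
      simp only [hfdef, if_neg hnk]
      have e1 : ((n + (k+1) : ℕ) : ℤ) - (k:ℤ) = ((n+1 : ℕ) : ℤ) := by push_cast; ring
      have e2 : ((n + (k+1) : ℕ) : ℝ) - (k:ℝ) = (n:ℝ)+1 := by push_cast; ring
      have e3 : (k:ℤ) - ((n + (k+1):ℕ) : ℤ) = -((n+1 : ℕ):ℤ) := by push_cast; ring
      rw [e1, e2, e3, zpow_natCast, zpow_neg, zpow_natCast]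
      have hn1 : ((n:ℝ)+1) ≠ 0 := by positivity
      have hln : (l:ℝ)^(n+1) ≠ 0 := pow_ne_zero _ hl0
      field_simp
      rw [neg_pow (x/l), div_pow]
      field_simp
      ring
    · have e4 : (1:ℝ) - x/l = (l-x)/l := by field_simp
      have e5 : (1:ℝ) - -(x/l) = (l+x)/l := by field_simp; ring
      rw [e4, e5, Real.log_div (ne_of_gt hlx) hl0, Real.log_div (ne_of_gt hxl) hl0]
      ring
  have htsum : ∑' j, f j = (∑ j ∈ Finset.range k, f j)
      + x^k * (Real.log (l+x) - Real.log (l-x)) := by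
    rw [← hsumf.sum_add_tsum_nat_add (k+1), htail.tsum_eq, Finset.sum_range_succ]
    simp [hfdef]
  -- finite part equals the polynomial integral terms
  have hfin : ∑ j ∈ Finset.range k, f j
      = -∑ i ∈ Finset.range k, (l^(i+1) - (-l)^(i+1))/((i:ℝ)+1) * x^(k-1-i) := by
    rw [← Finset.sum_range_reflect (fun j => f j) k, ← Finset.sum_neg_distrib]
    apply Finset.sum_congr rfl
    intro i hi
    have hik := Finset.mem_range.mp hi
    have hne : k - 1 - i ≠ k := by omega
    have eZ : ((k - 1 - i : ℕ):ℤ) - (k:ℤ) = -((i+1:ℕ):ℤ) := by push_cast; omega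
    have eZ2 : (k:ℤ) - ((k-1-i:ℕ):ℤ) = ((i+1:ℕ):ℤ) := by push_cast; omega
    have eR : ((k - 1 - i : ℕ):ℝ) - (k:ℝ) = -((i:ℝ)+1) := by
      have : ((k - 1 - i : ℕ):ℤ) = (k:ℤ) - (i:ℤ) - 1 := by omega
      have := congrArg (fun z : ℤ => (z:ℝ)) this
      push_cast at this
      rw [this]; ring
    simp only [hfdef, if_neg hne, eZ, eZ2, eR, zpow_neg, zpow_natCast]
    have hinv : ((-1:ℝ)^(i+1))⁻¹ = (-1:ℝ)^(i+1) := by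
      rcases Nat.even_or_odd (i+1) with h | h <;> norm_num [h.neg_one_pow]
    have hne2 : ((i:ℝ)+1) ≠ 0 := by positivity
    rw [hinv, neg_pow, div_neg]
    field_simp
    rw [neg_pow]
    ring
  -- the polynomial part
  set P : ℝ → ℝ := fun r => ∑ i ∈ Finset.range k, r^i * x^(k-1-i) with hPdef
  have hPcont : Continuous P := by
    apply continuous_finset_sum
    intro i _
    exact (continuous_pow i).mul continuous_const
  have hPint : ∀ a b : ℝ, ∫ r in a..b, P r
      = ∑ i ∈ Finset.range k, (b^(i+1)-a^(i+1))/((i:ℝ)+1) * x^(k-1-i) := by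
    intro a b
    rw [hPdef]
    rw [intervalIntegral.integral_finset_sum]
    · refine Finset.sum_congr rfl fun i _ => ?_
      rw [intervalIntegral.integral_mul_const, integral_pow]
    · intro i _
      exact ((continuous_pow i).mul continuous_const).intervalIntegrable _ _
  have hiden : ∀ r : ℝ, r ≠ x → r^k/(r - x) = P r + x^k * (r-x)⁻¹ := by
    intro r hr
    have h0 : r - x ≠ 0 := sub_ne_zero.mpr hr
    have hg := geom_sum₂_mul r x k
    rw [hPdef]
    field_simp
    linarith [hg]
  -- a clean formula for an interval integral avoiding x
  have hIval : ∀ a b : ℝ, a ≤ b → x ∉ Icc a b →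
      ∫ r in a..b, r^k/(r-x) = (∫ r in a..b, P r) + x^k * Real.log ((b-x)/(a-x)) := by
    intro a b hab hxab
    have huIcc : Set.uIcc a b = Icc a b := uIcc_of_le hab
    have hne : ∀ r ∈ Set.uIcc a b, r - x ≠ 0 := by
      rw [huIcc]
      intro r hr
      exact sub_ne_zero.mpr (fun h => hxab (h ▸ hr))
    have hcongr : EqOn (fun r : ℝ => r^k/(r-x)) (fun r => P r + x^k*(r-x)⁻¹) (Set.uIcc a b) :=
      fun r hr => hiden r (sub_ne_zero.mp (hne r hr))
    rw [intervalIntegral.integral_congr hcongr]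
    have hint_inv : IntervalIntegrable (fun r : ℝ => (r-x)⁻¹) volume a b := by
      apply ContinuousOn.intervalIntegrable
      exact ContinuousOn.inv₀ (by fun_prop) hne
    rw [intervalIntegral.integral_add (hPcont.intervalIntegrable _ _) (hint_inv.const_mul _)]
    congr 1
    rw [intervalIntegral.integral_const_mul]
    congr 1
    rw [intervalIntegral.integral_comp_sub_right (fun u => u⁻¹) x]
    apply integral_inv
    rw [uIcc_of_le (by linarith : a - x ≤ b - x)]
    intro h0
    exact hxab ⟨by linarith [h0.1], by linarith [h0.2]⟩
  have hδ : (0:ℝ) < min (l-x) (l+x) := lt_min hlx hxl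
  -- the key formula for small ε
  have key : ∀ ε ∈ Ioo (0:ℝ) (min (l-x) (l+x)),
      (∫ r in Ioo (-l) l \ Ioo (x-ε) (x+ε), r^k/(r-x))
        = (∫ r in (-l)..l, P r) - (∫ r in (x-ε)..(x+ε), P r)
          + x^k * (Real.log (l-x) - Real.log (l+x)) := by
    rintro ε ⟨hε0, hε1⟩
    have ha : ε < l - x := lt_of_lt_of_le hε1 (min_le_left _ _)
    have hb : ε < l + x := lt_of_lt_of_le hε1 (min_le_right _ _)
    have h1 : -l < x - ε := by linarith
    have h2 : x + ε < l := by linarith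
    have h3 : x - ε < x + ε := by linarith
    have hset : Ioo (-l) l \ Ioo (x-ε) (x+ε) = Ioc (-l) (x-ε) ∪ Ico (x+ε) l := by
      ext r
      simp only [mem_diff, mem_Ioo, mem_union, mem_Ioc, mem_Ico, not_and, not_lt]
      constructor
      · rintro ⟨⟨ha', hb'⟩, hc⟩
        by_cases hd : x - ε < r
        · exact Or.inr ⟨hc hd, hb'⟩
        · exact Or.inl ⟨ha', not_lt.mp hd⟩
      · rintro (⟨ha', hb'⟩ | ⟨ha', hb'⟩)
        · exact ⟨⟨ha', by linarith⟩, fun hd => by linarith⟩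
        · exact ⟨⟨by linarith, hb'⟩, fun _ => ha'⟩
    have hcont1 : ContinuousOn (fun r : ℝ => r^k/(r-x)) (Icc (-l) (x-ε)) := by
      apply ContinuousOn.div (by fun_prop) (by fun_prop)
      intro r hr
      have := hr.2
      exact sub_ne_zero.mpr (by intro h; rw [h] at this; linarith)
    have hcont2 : ContinuousOn (fun r : ℝ => r^k/(r-x)) (Icc (x+ε) l) := by
      apply ContinuousOn.div (by fun_prop) (by fun_prop)
      intro r hr
      have := hr.1
      exact sub_ne_zero.mpr (by intro h; rw [h] at this; linarith)
    have hint1 : IntegrableOn (fun r : ℝ => r^k/(r-x)) (Ioc (-l) (x-ε)) :=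
      (hcont1.integrableOn_Icc).mono_set Ioc_subset_Icc_self
    have hint2 : IntegrableOn (fun r : ℝ => r^k/(r-x)) (Ico (x+ε) l) :=
      (hcont2.integrableOn_Icc).mono_set Ico_subset_Icc_self
    have hdisj : Disjoint (Ioc (-l) (x-ε)) (Ico (x+ε) l) := by
      rw [Set.disjoint_left]
      rintro r ⟨_, hr2⟩ ⟨hr3, _⟩
      linarith
    rw [hset, setIntegral_union hdisj measurableSet_Ico hint1 hint2]
    rw [integral_Ico_eq_integral_Ioo, ← integral_Ioc_eq_integral_Ioo,
      ← intervalIntegral.integral_of_le (le_of_lt (lt_of_lt_of_le h2 le_rfl)),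
      ← intervalIntegral.integral_of_le h1.le]
    rw [hIval (-l) (x-ε) h1.le (fun h => by linarith [h.2]),
      hIval (x+ε) l h2.le (fun h => by linarith [h.1])]
    have hsplit : (∫ r in (-l)..(x-ε), P r) + (∫ r in (x+ε)..l, P r)
        = (∫ r in (-l)..l, P r) - (∫ r in (x-ε)..(x+ε), P r) := by
      have hPii : ∀ a b : ℝ, IntervalIntegrable P volume a b :=
        fun a b => hPcont.intervalIntegrable a b
      have i1 := intervalIntegral.integral_add_adjacent_intervals
        (hPii (-l) (x-ε)) (hPii (x-ε) (x+ε))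
      have i2 := intervalIntegral.integral_add_adjacent_intervals
        (hPii (-l) (x+ε)) (hPii (x+ε) l)
      linarith
    have hlog : Real.log ((x-ε-x)/(-l-x)) + Real.log ((l-x)/(x+ε-x))
        = Real.log (l-x) - Real.log (l+x) := by
      have e1 : x - ε - x = -ε := by ring
      have e2 : -l - x = -(l+x) := by ring
      have e3 : x + ε - x = ε := by ring
      rw [e1, e2, e3, neg_div_neg_eq, Real.log_div (ne_of_gt hε0) (ne_of_gt hxl),
        Real.log_div (ne_of_gt hlx) (ne_of_gt hε0)]
      ring
    linear_combination hsplit + x^k * hlog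
  -- value of the limit
  have hC : -∑' j, f j = (∫ r in (-l)..l, P r) + x^k * (Real.log (l-x) - Real.log (l+x)) := by
    rw [htsum, hfin, hPint (-l) l]
    ring
  refine ⟨habs, ?_⟩
  -- continuity of the middle integral
  have hmid : Tendsto (fun ε : ℝ => ∫ r in (x-ε)..(x+ε), P r) (nhdsWithin 0 (Ioi 0)) (nhds 0) := by
    have hcont : Continuous (fun ε : ℝ =>
        ∑ i ∈ Finset.range k, ((x+ε)^(i+1)-(x-ε)^(i+1))/((i:ℝ)+1) * x^(k-1-i)) := by
      apply continuous_finset_sum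
      intro i _
      fun_prop
    have h0v : (∑ i ∈ Finset.range k, ((x+(0:ℝ))^(i+1)-(x-(0:ℝ))^(i+1))/((i:ℝ)+1) * x^(k-1-i)) = 0 := by
      simp
    have ht := hcont.tendsto 0
    rw [h0v] at ht
    have ht2 := ht.mono_left (nhdsWithin_le_nhds (s := Ioi (0:ℝ)))
    exact Tendsto.congr (fun ε => (hPint (x-ε) (x+ε)).symm) ht2
  have final : Tendsto (fun ε : ℝ => (∫ r in (-l)..l, P r) - (∫ r in (x-ε)..(x+ε), P r)
      + x^k * (Real.log (l-x) - Real.log (l+x))) (nhdsWithin 0 (Ioi 0))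
      (nhds ((∫ r in (-l)..l, P r) - 0 + x^k * (Real.log (l-x) - Real.log (l+x)))) :=
    (tendsto_const_nhds.sub hmid).add tendsto_const_nhds
  rw [sub_zero, ← hC] at final
  refine final.congr' ?_
  filter_upwards [Ioo_mem_nhdsGT hδ] with ε hε
  exact (key ε hε).symm
end

section
/- For |x| > l and a positive integer k, the principal value integral ∫_{|r|>l} r^{−k}/(r−x) dr equals ∑_{j≥1, j≠k} ((1−(−1)^{j−k})/(j−k)) x^{−j} l^{j−k}, with absolute convergence. -/
open MeasureTheory Filter Set Topology

noncomputable def pvG (x : ℝ) (k : ℕ) (r : ℝ) : ℝ :=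
  (x^k)⁻¹ * (Real.log (r - x) - Real.log r)
    + ∑ i ∈ Finset.range (k-1), (x^(k-1-i))⁻¹ * (r^(i+1))⁻¹ / (i+1)

lemma pv_key_ident (x r : ℝ) (k : ℕ) (hk : 1 ≤ k) (hx : x ≠ 0) (hr : r ≠ 0) (hrx : r ≠ x) :
    (x^k)⁻¹ * ((r-x)⁻¹ - r⁻¹) - ∑ i ∈ Finset.range (k-1), (x^(k-1-i))⁻¹ * (r^(i+2))⁻¹
      = (r^k)⁻¹ * (r-x)⁻¹ := by
  have hxr : x - r ≠ 0 := sub_ne_zero.mpr (fun h => hrx h.symm)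
  have ha : x ^ (k-1) ≠ 0 := pow_ne_zero _ hx
  have hb : r ^ (k-1) ≠ 0 := pow_ne_zero _ hr
  have hsum : ∀ i ∈ Finset.range (k-1),
      (x^(k-1-i))⁻¹ * (r^(i+2))⁻¹ = x ^ i * r ^ (k - 1 - 1 - i) / (x ^ (k-1) * r ^ k) := by
    intro i hi
    rw [Finset.mem_range] at hi
    have h1 : x ^ (k-1-i) * x ^ i = x ^ (k-1) := pow_sub_mul_pow x (le_of_lt hi)
    have h2 : r ^ (i+2) * r ^ (k-1-1-i) = r ^ k := by
      rw [← pow_add]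
      congr 1
      omega
    field_simp
    rw [← h1, ← h2]
    ring
  rw [Finset.sum_congr rfl hsum, ← Finset.sum_div]
  have hgeom : (∑ i ∈ Finset.range (k-1), x ^ i * r ^ (k - 1 - 1 - i)) * (x - r)
      = x ^ (k-1) - r ^ (k-1) := geom_sum₂_mul x r (k-1)
  have hs : (∑ i ∈ Finset.range (k-1), x ^ i * r ^ (k - 1 - 1 - i))
      = (x ^ (k-1) - r ^ (k-1)) / (x - r) := by
    field_simp [← hgeom]
    exact hgeom
  rw [hs]
  have hxk : x ^ k = x ^ (k-1) * x := by
    conv_lhs => rw [show k = (k-1)+1 by omega]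
    rw [pow_succ]
  have hrk : r ^ k = r ^ (k-1) * r := by
    conv_lhs => rw [show k = (k-1)+1 by omega]
    rw [pow_succ]
  rw [hxk, hrk]
  have hrx' : r - x ≠ 0 := sub_ne_zero.mpr hrx
  field_simp
  ring

lemma pvG_hasDerivAt (x : ℝ) (k : ℕ) (hk : 1 ≤ k) (hx : x ≠ 0) {r : ℝ} (hr : r ≠ 0)
    (hrx : r ≠ x) : HasDerivAt (pvG x k) (r ^ (-(k:ℤ)) / (r - x)) r := by
  have hrx' : r - x ≠ 0 := sub_ne_zero.mpr hrx
  have h1 : HasDerivAt (fun r : ℝ => Real.log (r - x) - Real.log r) ((r-x)⁻¹ - r⁻¹) r := by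
    have ha : HasDerivAt (fun r : ℝ => Real.log (r - x)) ((r-x)⁻¹) r := by
      have := (Real.hasDerivAt_log hrx').comp r ((hasDerivAt_id r).sub_const x)
      simpa [Function.comp_def] using this
    exact ha.sub (Real.hasDerivAt_log hr)
  have h2 : ∀ i : ℕ, HasDerivAt (fun r : ℝ => (x^(k-1-i))⁻¹ * (r^(i+1))⁻¹ / (i+1))
      (-((x^(k-1-i))⁻¹ * (r^(i+2))⁻¹)) r := by
    intro i
    have hp : HasDerivAt (fun r : ℝ => (r^(i+1))⁻¹) (-((i+1:ℕ) * r ^ i) / (r^(i+1))^2) r :=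
      (hasDerivAt_pow (i+1) r).inv (pow_ne_zero _ hr)
    have heq : -((i+1:ℕ) * r ^ i : ℝ) / (r^(i+1))^2 = -((i+1:ℝ) * (r^(i+2))⁻¹) := by
      have : ((r:ℝ)^(i+1))^2 = r ^ (i+2) * r ^ i := by ring
      rw [this]
      field_simp
      push_cast
      ring
    rw [heq] at hp
    have := (hp.const_mul ((x^(k-1-i))⁻¹)).div_const ((i:ℝ)+1)
    convert this using 1
    have hi1 : ((i:ℝ)+1) ≠ 0 := by positivity
    all_goals try rfl
    field_simp
  have hsum : HasDerivAt (fun r : ℝ => ∑ i ∈ Finset.range (k-1),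
      (x^(k-1-i))⁻¹ * (r^(i+1))⁻¹ / (i+1))
      (∑ i ∈ Finset.range (k-1), -((x^(k-1-i))⁻¹ * (r^(i+2))⁻¹)) r :=
    HasDerivAt.fun_sum (fun i _ => h2 i)
  have htot := (h1.const_mul ((x^k)⁻¹)).add hsum
  have : (x^k)⁻¹ * ((r-x)⁻¹ - r⁻¹)
      + ∑ i ∈ Finset.range (k-1), -((x^(k-1-i))⁻¹ * (r^(i+2))⁻¹)
      = r ^ (-(k:ℤ)) / (r - x) := by
    rw [Finset.sum_neg_distrib]
    rw [zpow_neg, zpow_natCast, div_eq_mul_inv]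
    rw [← pv_key_ident x r k hk hx hr hrx]
    ring
  rw [this] at htot
  exact htot

lemma pvG_tendsto (x : ℝ) (k : ℕ) {F : Filter ℝ}
    (h1 : Tendsto (fun r : ℝ => r⁻¹) F (𝓝 0))
    (h2 : ∀ᶠ r in F, r ≠ 0) (h3 : ∀ᶠ r in F, r - x ≠ 0) :
    Tendsto (pvG x k) F (𝓝 0) := by
  have hlog : Tendsto (fun r : ℝ => Real.log (r - x) - Real.log r) F (𝓝 0) := by
    have hq : Tendsto (fun r : ℝ => 1 - x * r⁻¹) F (𝓝 1) := by
      have := (h1.const_mul x).const_sub 1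
      simpa using this
    have hc : Tendsto (fun r : ℝ => Real.log (1 - x * r⁻¹)) F (𝓝 0) := by
      have := (Real.continuousAt_log (x := 1) one_ne_zero).tendsto.comp hq
      simpa [Function.comp_def] using this
    refine hc.congr' ?_
    filter_upwards [h2, h3] with r hr hrx
    have he : (1 : ℝ) - x * r⁻¹ = (r - x) / r := by field_simp
    rw [he, Real.log_div hrx hr]
  have hsum : Tendsto (fun r : ℝ => ∑ i ∈ Finset.range (k-1),
      (x^(k-1-i))⁻¹ * (r^(i+1))⁻¹ / (i+1)) F (𝓝 0) := by
    have : Tendsto (fun r : ℝ => ∑ i ∈ Finset.range (k-1),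
        (x^(k-1-i))⁻¹ * (r⁻¹)^(i+1) / (i+1)) F
        (𝓝 (∑ i ∈ Finset.range (k-1), (x^(k-1-i))⁻¹ * (0:ℝ)^(i+1) / (i+1))) := by
      refine tendsto_finset_sum _ (fun i _ => ?_)
      exact ((h1.pow (i+1)).const_mul _).div_const _
    simp only [zero_pow (Nat.succ_ne_zero _), mul_zero, zero_div, Finset.sum_const_zero] at this
    refine this.congr ?_
    intro r
    simp [inv_pow]
  have := (hlog.const_mul ((x^k)⁻¹)).add hsum
  simp only [mul_zero, add_zero] at this
  exact this

lemma pvG_tendsto_atTop (x : ℝ) (k : ℕ) : Tendsto (pvG x k) atTop (𝓝 0) :=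
  pvG_tendsto x k tendsto_inv_atTop_zero
    ((eventually_gt_atTop 0).mono fun _ h => ne_of_gt h)
    ((eventually_gt_atTop x).mono fun _ h => sub_ne_zero.mpr (ne_of_gt h))

lemma tendsto_inv_atBot_zero'' : Tendsto (fun r : ℝ => r⁻¹) atBot (𝓝 0) := by
  have h1 : Tendsto (fun s : ℝ => -(s⁻¹)) atTop (𝓝 (-0 : ℝ)) := tendsto_inv_atTop_zero.neg
  rw [neg_zero] at h1
  have h2 := h1.comp tendsto_neg_atBot_atTop
  refine h2.congr fun r => ?_
  simp [Function.comp_def, inv_neg]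

lemma pvG_tendsto_atBot (x : ℝ) (k : ℕ) : Tendsto (pvG x k) atBot (𝓝 0) :=
  pvG_tendsto x k tendsto_inv_atBot_zero''
    ((eventually_lt_atBot 0).mono fun _ h => ne_of_lt h)
    ((eventually_lt_atBot x).mono fun _ h => sub_ne_zero.mpr (ne_of_lt h))

lemma pv_ray_pos (x : ℝ) (k : ℕ) (hk : 1 ≤ k) (hx : x ≠ 0) (a : ℝ) (ha : 0 < a) (hax : x < a) :
    IntegrableOn (fun r : ℝ => r ^ (-(k:ℤ)) / (r - x)) (Ioi a) ∧
      ∫ r in Ioi a, r ^ (-(k:ℤ)) / (r - x) = - pvG x k a := by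
  have hderiv : ∀ r ∈ Ici a, HasDerivAt (pvG x k) (r ^ (-(k:ℤ)) / (r - x)) r := by
    intro r hr
    exact pvG_hasDerivAt x k hk hx (lt_of_lt_of_le ha hr).ne'
      (ne_of_gt (lt_of_lt_of_le hax hr))
  have hpos : ∀ r ∈ Ioi a, 0 ≤ r ^ (-(k:ℤ)) / (r - x) := by
    intro r hr
    have h0 : (0:ℝ) < r := lt_trans ha hr
    have h1 : (0:ℝ) < r - x := sub_pos.mpr (lt_trans hax hr)
    exact le_of_lt (div_pos (zpow_pos h0 _) h1)
  refine ⟨integrableOn_Ioi_deriv_of_nonneg' hderiv hpos (pvG_tendsto_atTop x k), ?_⟩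
  rw [integral_Ioi_of_hasDerivAt_of_nonneg' hderiv hpos (pvG_tendsto_atTop x k)]
  ring

lemma pv_ray_neg (x : ℝ) (k : ℕ) (hk : 1 ≤ k) (hx : x ≠ 0) (b : ℝ) (hb : b < 0) (hbx : b < x) :
    IntegrableOn (fun r : ℝ => r ^ (-(k:ℤ)) / (r - x)) (Iio b) ∧
      ∫ r in Iio b, r ^ (-(k:ℤ)) / (r - x) = pvG x k b := by
  set f : ℝ → ℝ := fun r => r ^ (-(k:ℤ)) / (r - x) with hf
  set h : ℝ → ℝ := fun s => - pvG x k (-s) with hh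
  have hderiv : ∀ s ∈ Ici (-b), HasDerivAt h (f (-s)) s := by
    intro s hs
    have hsb : -s ≤ b := by simpa [neg_le] using hs
    have hs0 : -s ≠ 0 := ne_of_lt (lt_of_le_of_lt hsb hb)
    have hsx : -s ≠ x := ne_of_lt (lt_of_le_of_lt hsb hbx)
    have h1 : HasDerivAt (fun s : ℝ => pvG x k (-s)) (f (-s) * (-1)) s :=
      (pvG_hasDerivAt x k hk hx hs0 hsx).comp s (hasDerivAt_neg s)
    have := h1.neg
    convert this using 1
    all_goals try rfl
    ring
  have htend : Tendsto h atTop (𝓝 0) := by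
    have := (pvG_tendsto_atBot x k).comp tendsto_neg_atTop_atBot
    simpa [hh, Function.comp_def] using this.neg
  have hsign : (∀ s ∈ Ioi (-b), 0 ≤ f (-s)) ∨ (∀ s ∈ Ioi (-b), f (-s) ≤ 0) := by
    have key : ∀ s ∈ Ioi (-b), (-s) < 0 ∧ (-s) - x < 0 := by
      intro s hs
      have : -s < b := by simpa [neg_lt] using hs
      exact ⟨lt_trans this hb, sub_neg.mpr (lt_trans this hbx)⟩
    rcases Nat.even_or_odd k with hke | hko
    · refine Or.inr (fun s hs => ?_)
      obtain ⟨h1, h2⟩ := key s hs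
      have hev : Even (-(k:ℤ)) := by rw [even_neg]; exact_mod_cast hke
      have : (-s) ^ (-(k:ℤ)) = (s:ℝ) ^ (-(k:ℤ)) := by
        rw [show (-s : ℝ) = -s from rfl, hev.neg_zpow]
      have hs0 : (0:ℝ) < s := by linarith [h1]
      have hnum : (0:ℝ) < (-s) ^ (-(k:ℤ)) := by rw [this]; exact zpow_pos hs0 _
      exact le_of_lt (div_neg_of_pos_of_neg hnum h2)
    · refine Or.inl (fun s hs => ?_)
      obtain ⟨h1, h2⟩ := key s hs
      have hod : Odd (-(k:ℤ)) := by rw [odd_neg]; exact_mod_cast hko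
      have hs0 : (0:ℝ) < s := by linarith [h1]
      have : (-s) ^ (-(k:ℤ)) = -((s:ℝ) ^ (-(k:ℤ))) := hod.neg_zpow s
      have hnum : (-s) ^ (-(k:ℤ)) < 0 := by rw [this]; simpa using zpow_pos hs0 (-(k:ℤ))
      exact le_of_lt (div_pos_of_neg_of_neg hnum h2)
  have main : IntegrableOn (fun s => f (-s)) (Ioi (-b)) ∧
      ∫ s in Ioi (-b), f (-s) = 0 - h (-b) := by
    rcases hsign with hpos | hneg
    · exact ⟨integrableOn_Ioi_deriv_of_nonneg' hderiv hpos htend,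
        integral_Ioi_of_hasDerivAt_of_nonneg' hderiv hpos htend⟩
    · exact ⟨integrableOn_Ioi_deriv_of_nonpos' hderiv hneg htend,
        integral_Ioi_of_hasDerivAt_of_nonpos' hderiv hneg htend⟩
  have hIic : IntegrableOn f (Iic b) := by
    rw [← Measure.map_neg_eq_self (volume : Measure ℝ)]
    have m : MeasurableEmbedding fun x : ℝ => -x := (Homeomorph.neg ℝ).measurableEmbedding
    rw [m.integrableOn_map_iff]
    have : (fun x : ℝ => -x) ⁻¹' (Iic b) = Ici (-b) := by
      ext y; simp [neg_le]
    rw [this]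
    have := main.1
    refine (integrableOn_Ici_iff_integrableOn_Ioi).mpr ?_
    exact this.congr_fun (fun s _ => rfl) measurableSet_Ioi
  constructor
  · exact hIic.mono_set Iio_subset_Iic_self
  · have e1 : ∫ s in Ioi (-b), f (-s) = ∫ r in Iic b, f r := by
      simpa using integral_comp_neg_Ioi (-b) f
    have e2 : ∫ r in Iic b, f r = ∫ r in Iio b, f r := integral_Iic_eq_integral_Iio
    rw [← e2, ← e1, main.2, hh]
    simp

lemma pv_seg (x : ℝ) (k : ℕ) (hk : 1 ≤ k) (hx : x ≠ 0) {a b : ℝ} (hab : a ≤ b)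
    (h : ∀ r ∈ Icc a b, r ≠ 0 ∧ r ≠ x) :
    IntegrableOn (fun r : ℝ => r ^ (-(k:ℤ)) / (r - x)) (Ioc a b) ∧
      ∫ r in Ioc a b, r ^ (-(k:ℤ)) / (r - x) = pvG x k b - pvG x k a := by
  have huIcc : uIcc a b = Icc a b := uIcc_of_le hab
  have hderiv : ∀ r ∈ uIcc a b, HasDerivAt (pvG x k) (r ^ (-(k:ℤ)) / (r - x)) r := by
    intro r hr
    rw [huIcc] at hr
    exact pvG_hasDerivAt x k hk hx (h r hr).1 (h r hr).2
  have hcont : ContinuousOn (fun r : ℝ => r ^ (-(k:ℤ)) / (r - x)) (uIcc a b) := by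
    intro r hr
    rw [huIcc] at hr
    have h1 : ContinuousAt (fun r : ℝ => r ^ (-(k:ℤ))) r :=
      continuousAt_zpow₀ r _ (Or.inl (h r hr).1)
    have h2 : ContinuousAt (fun r : ℝ => r - x) r := continuousAt_id.sub continuousAt_const
    exact ((h1.div h2 (sub_ne_zero.mpr (h r hr).2))).continuousWithinAt
  have hInt : IntervalIntegrable (fun r : ℝ => r ^ (-(k:ℤ)) / (r - x)) volume a b :=
    hcont.intervalIntegrable
  refine ⟨(intervalIntegrable_iff_integrableOn_Ioc_of_le hab).mp hInt, ?_⟩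
  have := intervalIntegral.integral_eq_sub_of_hasDerivAt hderiv hInt
  rwa [intervalIntegral.integral_of_le hab] at this

lemma pv_eval (l x : ℝ) (k : ℕ) (hl : 0 < l) (hx : l < |x|) (hk : 1 ≤ k) {ε : ℝ}
    (hε : 0 < ε) (hε2 : ε < |x| - l) :
    ∫ r in {r : ℝ | l < |r|} \ Ioo (x - ε) (x + ε), r ^ (-(k:ℤ)) / (r - x)
      = pvG x k (-l) - pvG x k l + (pvG x k (x - ε) - pvG x k (x + ε)) := by
  have hx0 : x ≠ 0 := by intro h; rw [h, abs_zero] at hx; linarith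
  set f : ℝ → ℝ := fun r => r ^ (-(k:ℤ)) / (r - x) with hf
  rcases lt_abs.mp hx with hxl | hxl
  · -- case l < x
    have habs : |x| = x := abs_of_pos (lt_trans hl hxl)
    rw [habs] at hε2
    have hset : {r : ℝ | l < |r|} \ Ioo (x - ε) (x + ε)
        = Iio (-l) ∪ (Ioc l (x - ε) ∪ Ici (x + ε)) := by
      ext r
      simp only [mem_diff, mem_setOf_eq, lt_abs, mem_Ioo, not_and, not_lt, mem_union, mem_Iio,
        mem_Ioc, mem_Ici]
      constructor
      · rintro ⟨h1 | h1, h2⟩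
        · by_cases hr : x - ε < r
          · exact Or.inr (Or.inr (h2 hr))
          · exact Or.inr (Or.inl ⟨h1, by linarith⟩)
        · exact Or.inl (by linarith)
      · rintro (h | ⟨h1, h2⟩ | h)
        · exact ⟨Or.inr (by linarith), fun hh => by linarith⟩
        · exact ⟨Or.inl h1, fun hh => by linarith⟩
        · exact ⟨Or.inl (by linarith), fun _ => h⟩
    have hray1 := pv_ray_neg x k hk hx0 (-l) (by linarith) (by linarith)
    have hseg := pv_seg x k hk hx0 (a := l) (b := x - ε) (by linarith)
      (fun r hr => ⟨by rcases hr with ⟨h1, h2⟩; intro h; rw [h] at h1; linarith,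
        by rcases hr with ⟨h1, h2⟩; intro h; rw [h] at h2; linarith⟩)
    have hray2 := pv_ray_pos x k hk hx0 (x + ε) (by linarith) (by linarith)
    have hIci : IntegrableOn f (Ici (x + ε)) :=
      (integrableOn_Ici_iff_integrableOn_Ioi).mpr hray2.1
    have hd1 : Disjoint (Iio (-l)) (Ioc l (x - ε) ∪ Ici (x + ε)) := by
      rw [Set.disjoint_left]
      rintro r hr (h | h)
      · rw [mem_Iio] at hr; rw [mem_Ioc] at h; linarith
      · rw [mem_Iio] at hr; rw [mem_Ici] at h; linarith
    have hd2 : Disjoint (Ioc l (x - ε)) (Ici (x + ε)) := by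
      rw [Set.disjoint_left]
      intro r hr h
      rw [mem_Ioc] at hr; rw [mem_Ici] at h; linarith
    rw [hset, setIntegral_union hd1 ((measurableSet_Ioc.union measurableSet_Ici))
      hray1.1 (hseg.1.union hIci),
      setIntegral_union hd2 measurableSet_Ici hseg.1 hIci]
    rw [hray1.2, hseg.2, integral_Ici_eq_integral_Ioi, hray2.2]
    ring
  · -- case x < -l
    have hxneg : x < -l := by linarith
    have habs : |x| = -x := abs_of_neg (by linarith)
    rw [habs] at hε2
    have hset : {r : ℝ | l < |r|} \ Ioo (x - ε) (x + ε)
        = Iic (x - ε) ∪ (Ico (x + ε) (-l) ∪ Ioi l) := by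
      ext r
      simp only [mem_diff, mem_setOf_eq, lt_abs, mem_Ioo, not_and, not_lt, mem_union, mem_Iic,
        mem_Ico, mem_Ioi]
      constructor
      · rintro ⟨h1 | h1, h2⟩
        · exact Or.inr (Or.inr h1)
        · by_cases hr : x - ε < r
          · exact Or.inr (Or.inl ⟨h2 hr, by linarith⟩)
          · exact Or.inl (by linarith)
      · rintro (h | ⟨h1, h2⟩ | h)
        · exact ⟨Or.inr (by linarith), fun hh => by linarith⟩
        · exact ⟨Or.inr (by linarith), fun _ => h1⟩
        · exact ⟨Or.inl h, fun hh => by linarith⟩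
    have hray1 := pv_ray_neg x k hk hx0 (x - ε) (by linarith) (by linarith)
    have hseg := pv_seg x k hk hx0 (a := x + ε) (b := -l) (by linarith)
      (fun r hr => ⟨by rcases hr with ⟨h1, h2⟩; intro h; rw [h] at h2; linarith,
        by rcases hr with ⟨h1, h2⟩; intro h; rw [h] at h1; linarith⟩)
    have hray2 := pv_ray_pos x k hk hx0 l hl (by linarith)
    have hIic : IntegrableOn f (Iic (x - ε)) :=
      (integrableOn_Iic_iff_integrableOn_Iio).mpr hray1.1
    have hIco : IntegrableOn f (Ico (x + ε) (-l)) :=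
      (integrableOn_Ico_iff_integrableOn_Ioo).mpr ((integrableOn_Ioc_iff_integrableOn_Ioo).mp hseg.1)
    have hd1 : Disjoint (Iic (x - ε)) (Ico (x + ε) (-l) ∪ Ioi l) := by
      rw [Set.disjoint_left]
      rintro r hr (h | h)
      · rw [mem_Iic] at hr; rw [mem_Ico] at h; linarith
      · rw [mem_Iic] at hr; rw [mem_Ioi] at h; linarith
    have hd2 : Disjoint (Ico (x + ε) (-l)) (Ioi l) := by
      rw [Set.disjoint_left]
      intro r hr h
      rw [mem_Ico] at hr; rw [mem_Ioi] at h; linarith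
    rw [hset, setIntegral_union hd1 ((measurableSet_Ico.union measurableSet_Ioi))
      hIic (hIco.union hray2.1),
      setIntegral_union hd2 measurableSet_Ioi hIco hray2.1]
    rw [integral_Iic_eq_integral_Iio, hray1.2, integral_Ico_eq_integral_Ioo,
      ← integral_Ioc_eq_integral_Ioo, hseg.2, hray2.2]
    ring
lemma pv_series (l x : ℝ) (k : ℕ) (hl : 0 < l) (hx : l < |x|) (hk : 1 ≤ k) :
    HasSum (fun n : ℕ =>
      if n + 1 = k then (0 : ℝ) else
        (1 - (-1 : ℝ) ^ (((n : ℤ) + 1) - (k : ℤ))) / (((n : ℝ) + 1) - (k : ℝ)) *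
          x ^ (-((n : ℤ) + 1)) * l ^ (((n : ℤ) + 1) - (k : ℤ)))
      ((x^k)⁻¹ * (Real.log (l + x) - Real.log (l - x))
        + ∑ i ∈ Finset.range (k-1),
            (x^(k-1-i))⁻¹ * (((-l)^(i+1))⁻¹ - (l^(i+1))⁻¹) / (i+1)) := by
  have hx0 : x ≠ 0 := by
    intro h; rw [h, abs_zero] at hx; linarith
  have hxl1 : x - l ≠ 0 := by
    rcases lt_abs.mp hx with h | h
    · exact ne_of_gt (by linarith)
    · exact ne_of_lt (by linarith)
  have hxl2 : x + l ≠ 0 := by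
    rcases lt_abs.mp hx with h | h
    · exact ne_of_gt (by linarith)
    · exact ne_of_lt (by linarith)
  set t : ℝ := l / x with ht
  have habs : |t| < 1 := by
    rw [ht, abs_div, abs_of_pos hl, div_lt_one (lt_trans hl hx)]
    exact hx
  set f : ℕ → ℝ := fun n =>
      if n + 1 = k then (0 : ℝ) else
        (1 - (-1 : ℝ) ^ (((n : ℤ) + 1) - (k : ℤ))) / (((n : ℝ) + 1) - (k : ℝ)) *
          x ^ (-((n : ℤ) + 1)) * l ^ (((n : ℤ) + 1) - (k : ℤ)) with hfdef
  have htail : HasSum (fun n => f (n + k))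
      ((x^k)⁻¹ * (Real.log (l + x) - Real.log (l - x))) := by
    have h1 := Real.hasSum_pow_div_log_of_abs_lt_one habs
    have h2 := Real.hasSum_pow_div_log_of_abs_lt_one (x := -t) (by rwa [abs_neg])
    have h3 := (h1.sub h2).mul_left ((x^k)⁻¹)
    have hval : (x^k)⁻¹ * (-Real.log (1 - t) - -Real.log (1 - -t))
        = (x^k)⁻¹ * (Real.log (l + x) - Real.log (l - x)) := by
      have e1 : (1 : ℝ) - t = (x - l)/x := by rw [ht]; field_simp
      have e2 : (1 : ℝ) - -t = (x + l)/x := by rw [ht]; field_simp; ring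
      rw [e1, e2, Real.log_div hxl1 hx0, Real.log_div hxl2 hx0]
      have e3 : Real.log (l - x) = Real.log (x - l) := by
        rw [show l - x = -(x - l) by ring, Real.log_neg_eq_log]
      have e4 : Real.log (l + x) = Real.log (x + l) := by rw [add_comm]
      rw [e3, e4]; ring
    rw [hval] at h3
    refine h3.congr_fun fun n => ?_
    rw [hfdef]
    simp only
    rw [if_neg (by omega : ¬ (n + k + 1 = k))]
    have e1 : ((n + k : ℕ) : ℤ) + 1 - (k : ℤ) = ((n + 1 : ℕ) : ℤ) := by push_cast; ring
    have e2 : -(((n + k : ℕ) : ℤ) + 1) = -((n + k + 1 : ℕ) : ℤ) := by push_cast; ring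
    rw [e1, e2, zpow_natCast, zpow_natCast, zpow_neg, zpow_natCast]
    have e3 : ((n + k : ℕ) : ℝ) + 1 - (k : ℝ) = (n : ℝ) + 1 := by push_cast; ring
    rw [e3]
    have hn1 : ((n : ℝ) + 1) ≠ 0 := by positivity
    have e4 : (-t) ^ (n+1) = (-1 : ℝ)^(n+1) * t^(n+1) := by rw [neg_pow]
    rw [e4, ht, div_pow]
    have hxp : (x : ℝ) ^ (n+1) ≠ 0 := pow_ne_zero _ hx0
    have hxk : (x : ℝ) ^ k ≠ 0 := pow_ne_zero _ hx0
    have e5 : (x : ℝ) ^ (n + k + 1) = x ^ (n+1) * x ^ k := by rw [← pow_add]; ring_nf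
    rw [e5, mul_inv]
    field_simp
  have hfin : ∑ n ∈ Finset.range k, f n = ∑ i ∈ Finset.range (k-1),
      (x^(k-1-i))⁻¹ * (((-l)^(i+1))⁻¹ - (l^(i+1))⁻¹) / (i+1) := by
    have h1 := Finset.sum_range_succ f (k-1)
    rw [show (k-1)+1 = k from by omega] at h1
    have h2 : f (k-1) = 0 := by
      rw [hfdef]; simp only; rw [if_pos (by omega)]
    rw [h1, h2, add_zero, ← Finset.sum_range_reflect]
    refine Finset.sum_congr rfl fun n hn => ?_
    rw [Finset.mem_range] at hn
    set m : ℕ := k - 1 - 1 - n with hm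
    set p : ℕ := n + 1 with hp
    have hkp : k = m + 1 + p := by omega
    have i4 : k - 1 - n = m + 1 := by omega
    rw [i4]
    rw [hfdef]; simp only
    rw [if_neg (by omega : ¬ (m + 1 = k))]
    have e1 : ((m : ℤ) + 1) - (k : ℤ) = -((p : ℕ) : ℤ) := by rw [hkp]; push_cast; ring
    have e2 : -((m : ℤ) + 1) = -((m+1 : ℕ) : ℤ) := by push_cast; ring
    rw [e1, e2, zpow_neg, zpow_natCast, zpow_neg, zpow_natCast, zpow_neg, zpow_natCast]
    have e3 : ((m : ℝ) + 1) - (k : ℝ) = -(p : ℝ) := by rw [hkp]; push_cast; ring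
    rw [e3]
    have e4 : ((-l : ℝ)) ^ p = (-1 : ℝ)^p * l^p := by rw [neg_pow]
    rw [e4, mul_inv]
    have hlp : (l : ℝ) ^ p ≠ 0 := pow_ne_zero _ (ne_of_gt hl)
    have hxp : (x : ℝ) ^ (m+1) ≠ 0 := pow_ne_zero _ hx0
    have hp0 : (p : ℝ) ≠ 0 := by positivity
    have hm1 : ((-1 : ℝ) ^ p) ≠ 0 := by
      rcases Nat.even_or_odd p with h | h
      · rw [h.neg_one_pow]; norm_num
      · rw [h.neg_one_pow]; norm_num
    field_simp
    rw [hp]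
    push_cast
    ring
  have := (hasSum_nat_add_iff (f := f) k).mp htail
  rwa [hfin] at this

lemma pv_value_eq (l x : ℝ) (k : ℕ) (hl : 0 < l) (hx : l < |x|) :
    pvG x k (-l) - pvG x k l
      = (x^k)⁻¹ * (Real.log (l + x) - Real.log (l - x))
        + ∑ i ∈ Finset.range (k-1),
            (x^(k-1-i))⁻¹ * (((-l)^(i+1))⁻¹ - (l^(i+1))⁻¹) / (i+1) := by
  have e1 : Real.log ((-l) - x) = Real.log (l + x) := by
    rw [show (-l : ℝ) - x = -(l + x) by ring, Real.log_neg_eq_log]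
  have e2 : Real.log (-l : ℝ) = Real.log l := Real.log_neg_eq_log l
  have e3 : Real.log (l - x) = Real.log (l - x) := rfl
  have hsplit : ∑ i ∈ Finset.range (k-1),
      (x^(k-1-i))⁻¹ * (((-l)^(i+1))⁻¹ - (l^(i+1))⁻¹) / (i+1)
      = (∑ i ∈ Finset.range (k-1), (x^(k-1-i))⁻¹ * (((-l):ℝ)^(i+1))⁻¹ / (i+1))
        - ∑ i ∈ Finset.range (k-1), (x^(k-1-i))⁻¹ * ((l:ℝ)^(i+1))⁻¹ / (i+1) := by
    rw [← Finset.sum_sub_distrib]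
    exact Finset.sum_congr rfl fun i _ => by ring
  rw [pvG, pvG, e1, e2, hsplit]
  ring

lemma pv_diff_tendsto (x : ℝ) (k : ℕ) (hx0 : x ≠ 0) :
    Tendsto (fun ε : ℝ => pvG x k (x - ε) - pvG x k (x + ε)) (𝓝[>] (0:ℝ)) (𝓝 0) := by
  set S : ℝ → ℝ := fun r => ∑ i ∈ Finset.range (k-1), (x^(k-1-i))⁻¹ * (r^(i+1))⁻¹ / (i+1)
    with hS
  set H : ℝ → ℝ := fun ε => (x^k)⁻¹ * (Real.log (x + ε) - Real.log (x - ε))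
    + (S (x - ε) - S (x + ε)) with hH
  have hident : ∀ ε : ℝ, pvG x k (x - ε) - pvG x k (x + ε) = H ε := by
    intro ε
    rw [hH]
    simp only [pvG, hS]
    rw [show x - ε - x = -ε by ring, show x + ε - x = ε by ring, Real.log_neg_eq_log]
    ring
  have hid : ContinuousAt (fun ε : ℝ => ε) (0:ℝ) := continuousAt_id
  have hcont1 : ContinuousAt (fun ε : ℝ => Real.log (x + ε)) 0 :=
    ContinuousAt.log (continuousAt_const.add hid) (by simpa using hx0)
  have hcont2 : ContinuousAt (fun ε : ℝ => Real.log (x - ε)) 0 :=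
    ContinuousAt.log (continuousAt_const.sub hid) (by simpa using hx0)
  have hS1 : ContinuousAt (fun ε : ℝ => S (x - ε)) 0 := by
    rw [hS]
    refine tendsto_finset_sum _ fun i _ => ?_
    exact ((((continuousAt_const.sub hid).pow (i+1)).inv₀
      (by simpa using pow_ne_zero (i+1) hx0)).const_mul _).div_const _
  have hS2 : ContinuousAt (fun ε : ℝ => S (x + ε)) 0 := by
    rw [hS]
    refine tendsto_finset_sum _ fun i _ => ?_
    exact ((((continuousAt_const.add hid).pow (i+1)).inv₀
      (by simpa using pow_ne_zero (i+1) hx0)).const_mul _).div_const _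
  have hHcont : ContinuousAt H 0 := by
    rw [hH]
    exact ((hcont1.sub hcont2).const_mul _).add (hS1.sub hS2)
  have hH0 : H 0 = 0 := by
    rw [hH]; simp
  have hten := hHcont.tendsto
  rw [hH0] at hten
  have hmain : Tendsto H (𝓝[>] (0:ℝ)) (𝓝 0) := hten.mono_left nhdsWithin_le_nhds
  exact hmain.congr fun ε => (hident ε).symm

/-- For |x| > l, k ≥ 1: the principal value integral
∫_{|r|>l} r^{−k}/(r−x) dr (PV at r = x) equals
∑_{j≥1, j≠k} ((1−(−1)^{j−k})/(j−k)) x^{−j} l^{j−k}, with absolute convergence.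
The series over j ≥ 1 is written over n : ℕ with j = n + 1. -/
theorem stmt_3 (l x : ℝ) (k : ℕ) (hl : 0 < l) (hx : l < |x|) (hk : 1 ≤ k) :
    Summable (fun n : ℕ =>
      |if n + 1 = k then (0 : ℝ) else
        (1 - (-1 : ℝ) ^ (((n : ℤ) + 1) - (k : ℤ))) / (((n : ℝ) + 1) - (k : ℝ)) *
          x ^ (-((n : ℤ) + 1)) * l ^ (((n : ℤ) + 1) - (k : ℤ))|)
    ∧
    Tendsto (fun ε : ℝ =>
        ∫ r in {r : ℝ | l < |r|} \ Ioo (x - ε) (x + ε), r ^ (-(k : ℤ)) / (r - x))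
      (nhdsWithin 0 (Ioi 0))
      (nhds (∑' n : ℕ,
        if n + 1 = k then (0 : ℝ) else
          (1 - (-1 : ℝ) ^ (((n : ℤ) + 1) - (k : ℤ))) / (((n : ℝ) + 1) - (k : ℝ)) *
            x ^ (-((n : ℤ) + 1)) * l ^ (((n : ℤ) + 1) - (k : ℤ)))) := by
  have hx0 : x ≠ 0 := by intro h; rw [h, abs_zero] at hx; linarith
  have hsum := pv_series l x k hl hx hk
  refine ⟨summable_abs_iff.mpr hsum.summable, ?_⟩
  rw [hsum.tsum_eq, ← pv_value_eq l x k hl hx]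
  have heq : ∀ᶠ ε in 𝓝[>] (0:ℝ),
      (∫ r in {r : ℝ | l < |r|} \ Ioo (x - ε) (x + ε), r ^ (-(k : ℤ)) / (r - x))
        = pvG x k (-l) - pvG x k l + (pvG x k (x - ε) - pvG x k (x + ε)) := by
    filter_upwards [Ioo_mem_nhdsGT_of_mem
      (show (0:ℝ) ∈ Ico (0:ℝ) (|x| - l) from ⟨le_refl _, by linarith⟩)] with ε hε
    exact pv_eval l x k hl hx hk hε.1 hε.2
  have hlim : Tendsto
      (fun ε : ℝ => pvG x k (-l) - pvG x k l + (pvG x k (x - ε) - pvG x k (x + ε)))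
      (𝓝[>] (0:ℝ)) (𝓝 (pvG x k (-l) - pvG x k l)) := by
    have := (tendsto_const_nhds (x := pvG x k (-l) - pvG x k l)
      (f := 𝓝[>] (0:ℝ))).add (pv_diff_tendsto x k hx0)
    simpa using this
  exact hlim.congr' (EventuallyEq.symm heq)
end

section
/- The function u₂⁺(x) = K (l²−x²)^{1/2} cos(γ ln|(l+x)/(l−x)|) (the classical England solution for an interface crack opening), with K > 0 and γ ≠ 0, changes sign infinitely many times in every left neighborhood of x = l; in particular there exist sequences x_n → l⁻ with u₂⁺(x_n) > 0 and x_n' → l⁻ with u₂⁺(x_n') < 0. -/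
open Filter Set
open Real (pi_pos)

lemma aux_seq (l γ : ℝ) (hl : 0 < l) (t : ℕ → ℝ) (ht0 : ∀ n, 0 ≤ t n)
    (ht : Tendsto t atTop atTop) :
    ∃ a : ℕ → ℝ, (∀ n, a n ∈ Ioo (-l) l) ∧
      Tendsto a atTop (nhdsWithin l (Iio l)) ∧
      (∀ n, γ * Real.log |(l + a n) / (l - a n)| = γ * t n) ∧
      (∀ n, 0 < Real.sqrt (l ^ 2 - (a n) ^ 2)) := by
  set a : ℕ → ℝ := fun n => l * (Real.exp (t n) - 1) / (Real.exp (t n) + 1) with ha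
  have hE : ∀ n, 0 < Real.exp (t n) := fun n => Real.exp_pos _
  have hmem : ∀ n, a n ∈ Ioo (-l) l := by
    intro n
    have hE1 : 0 < Real.exp (t n) + 1 := by linarith [hE n]
    constructor
    · rw [ha]
      rw [neg_lt, ← neg_div]
      rw [div_lt_iff₀ hE1]
      nlinarith [hE n]
    · rw [ha, div_lt_iff₀ hE1]
      nlinarith [hE n]
  have hratio : ∀ n, (l + a n) / (l - a n) = Real.exp (t n) := by
    intro n
    have hE1 : Real.exp (t n) + 1 ≠ 0 := by positivity
    have hla : 0 < l - a n := by linarith [(hmem n).2]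
    rw [ha]
    field_simp [hl.ne']
    ring
  refine ⟨a, hmem, ?_, ?_, ?_⟩
  · apply tendsto_nhdsWithin_of_tendsto_nhds_of_eventually_within
    · have h1 : Tendsto (fun n => Real.exp (t n) + 1) atTop atTop :=
        (Real.tendsto_exp_atTop.comp ht).atTop_add tendsto_const_nhds
      have h2 : Tendsto (fun n => (2 * l) / (Real.exp (t n) + 1)) atTop (nhds 0) :=
        Tendsto.div_atTop tendsto_const_nhds h1
      have h3 : Tendsto (fun n => l - (2 * l) / (Real.exp (t n) + 1)) atTop (nhds (l - 0)) :=
        tendsto_const_nhds.sub h2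
      rw [sub_zero] at h3
      convert h3 using 2 with n
      have hE1 : Real.exp (t n) + 1 ≠ 0 := by positivity
      rw [ha]
      field_simp
      ring
    · exact Eventually.of_forall fun n => (hmem n).2
  · intro n
    rw [hratio n, abs_of_pos (hE n), Real.log_exp]
  · intro n
    apply Real.sqrt_pos.mpr
    nlinarith [(hmem n).1, (hmem n).2]

/-- The England interface-crack opening u₂⁺(x) = K√(l²−x²)·cos(γ ln|(l+x)/(l−x)|) with
K > 0, γ ≠ 0 changes sign infinitely often in every left neighborhood of x = l: there are
sequences in (−l,l) tending to l from the left on which it is positive, resp. negative. -/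
theorem stmt_17 (l K γ : ℝ) (hl : 0 < l) (hK : 0 < K) (hγ : γ ≠ 0) :
    (∃ a : ℕ → ℝ, (∀ n, a n ∈ Ioo (-l) l) ∧
      Tendsto a atTop (nhdsWithin l (Iio l)) ∧
      ∀ n, 0 < K * Real.sqrt (l ^ 2 - (a n) ^ 2) *
        Real.cos (γ * Real.log |(l + a n) / (l - a n)|))
    ∧
    (∃ b : ℕ → ℝ, (∀ n, b n ∈ Ioo (-l) l) ∧
      Tendsto b atTop (nhdsWithin l (Iio l)) ∧
      ∀ n, K * Real.sqrt (l ^ 2 - (b n) ^ 2) *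
        Real.cos (γ * Real.log |(l + b n) / (l - b n)|) < 0) := by
  have hγ' : 0 < |γ| := abs_pos.mpr hγ
  have hpi := Real.pi_pos
  constructor
  · set t : ℕ → ℝ := fun n => (n * (2 * Real.pi)) / |γ| with htdef
    have ht0 : ∀ n, 0 ≤ t n := fun n => by positivity
    have ht : Tendsto t atTop atTop := by
      apply Tendsto.atTop_div_const hγ'
      exact Tendsto.atTop_mul_const (by positivity) tendsto_natCast_atTop_atTop
    obtain ⟨a, hmem, htend, hlog, hsq⟩ := aux_seq l γ hl t ht0 ht
    refine ⟨a, hmem, htend, fun n => ?_⟩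
    have key : |γ| * t n = n * (2 * Real.pi) := by
      simp only [htdef]
      rw [mul_comm, div_mul_cancel₀ _ (ne_of_gt hγ')]
    have hcos : Real.cos (γ * t n) = 1 := by
      rw [← Real.cos_abs, abs_mul, abs_of_nonneg (ht0 n), key]
      exact Real.cos_nat_mul_two_pi n
    rw [hlog n, hcos, mul_one]
    exact mul_pos hK (hsq n)
  · set t : ℕ → ℝ := fun n => (n * (2 * Real.pi) + Real.pi) / |γ| with htdef
    have ht0 : ∀ n, 0 ≤ t n := fun n => by positivity
    have ht : Tendsto t atTop atTop := by
      apply Tendsto.atTop_div_const hγ'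
      apply Tendsto.atTop_add _ (tendsto_const_nhds (x := Real.pi))
      exact Tendsto.atTop_mul_const (by positivity) tendsto_natCast_atTop_atTop
    obtain ⟨b, hmem, htend, hlog, hsq⟩ := aux_seq l γ hl t ht0 ht
    refine ⟨b, hmem, htend, fun n => ?_⟩
    have key : |γ| * t n = n * (2 * Real.pi) + Real.pi := by
      simp only [htdef]
      rw [mul_comm, div_mul_cancel₀ _ (ne_of_gt hγ')]
    have hcos : Real.cos (γ * t n) = -1 := by
      rw [← Real.cos_abs, abs_mul, abs_of_nonneg (ht0 n), key]
      exact Real.cos_nat_mul_two_pi_add_pi n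
    rw [hlog n, hcos]
    nlinarith [mul_pos hK (hsq n)]
end
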